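/- arXiv:2111.03771 — 2 statements merged into one kernel-verified Lean document; each statement's English description precedes it below -/
import Mathlib

section
/- Let d ≥ 2 and let T be a d-regular rooted plane tree of height at least n with a labeling λ : V(T) → [1,n]. Then there exists g ∈ R (depending on λ) such that Σ_{η ∈ K(T,λ)} w(T,η) = z(fern_{d,n}, λ_fern) · g, where λ_fern is the root-leaf labeling of fern_{d,n} determined by λ: the root and leaves of fern_{d,n} receive the labels that λ assigns to the root of T and to the children of the vertices of LP_n(T), respectively. In particular z(fern_{d,n}, λ_fern) divides Σ_{η ∈ K(T,λ)} w(T,η) in R. -/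
open MvPolynomial

/-- A rooted plane tree with vertices labeled by `[1,n]`: a root label together with a
(linearly ordered) finite list of labeled subtrees. -/
inductive LTree (n : ℕ) : Type where
  | node : Fin n → List (LTree n) → LTree n

namespace LTree

/-- The label of the root. -/
def label {n : ℕ} : LTree n → Fin n
  | node i _ => i

/-- The (ordered) list of subtrees rooted at the children of the root. -/
def children {n : ℕ} : LTree n → List (LTree n)
  | node _ cs => cs

/-- The weight `w(T,λ) = ∏_{e} w(e,λ)`, the product over all edges `e` of `T`, from a
parent labeled `i` to a child labeled `j`, of the indeterminate `a_{i,j}`. -/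
noncomputable def weight {n : ℕ} : LTree n → MvPolynomial (Fin n × Fin n) ℚ
  | node i cs => (cs.attach.map fun c => X (i, c.1.label) * weight c.1).prod
decreasing_by simp only [LTree.node.sizeOf_spec]; have := List.sizeOf_lt_of_mem c.2; omega

/-- The multidegree given by the labels of the leaves of `T` (a tree with no children is
a single leaf). -/
noncomputable def leafDeg {n : ℕ} : LTree n → (Fin n →₀ ℕ)
  | node i [] => Finsupp.single i 1
  | node _ (c :: cs) => ((c :: cs).attach.map fun x => leafDeg x.1).sum
decreasing_by simp only [LTree.node.sizeOf_spec]; have := List.sizeOf_lt_of_mem x.2; omega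

/-- A tree is `d`-regular if every vertex has exactly `d` children or none. -/
def IsReg {n : ℕ} (d : ℕ) : LTree n → Prop
  | node _ cs => (cs.length = d ∨ cs.length = 0) ∧ ∀ c ∈ cs.attach, IsReg d c.1
decreasing_by simp only [LTree.node.sizeOf_spec]; have := List.sizeOf_lt_of_mem c.2; omega

/-- The subtree of `T` at the position given by a list of child indices (root = `[]`),
or `none` if no such vertex exists. -/
def subtreeAt? {n : ℕ} : LTree n → List ℕ → Option (LTree n)
  | t, [] => some t
  | t, k :: q => match t.children[k]? with
    | some c => subtreeAt? c q
    | none => none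

/-- The label of the vertex of `T` at a given position, if it exists. -/
def labelAt? {n : ℕ} (t : LTree n) (q : List ℕ) : Option (Fin n) :=
  (t.subtreeAt? q).map label

end LTree

/-- The weight-sum `z(fern_{d,n}, μ)` of the fern tree, defined recursively along the
leftmost path of the fern.  `fernZ r ts s` is the sum, over all labelings of the interior
vertices `u_1, …, u_{n-1}` of the leftmost path, of the product of the edge weights, where
the root `u_0` is labeled `r`, the `k`-th entry of `ts` is the list of labels of the leaf
children of `u_k`, and `s` is the list of labels of the `d` leaf children of the last
interior vertex `u_{n-1}`. -/
noncomputable def fernZ {n : ℕ} :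
    Fin n → List (List (Fin n)) → List (Fin n) → MvPolynomial (Fin n × Fin n) ℚ
  | r, [], s => (s.map fun j => X (r, j)).prod
  | r, t :: ts, s =>
      ∑ c : Fin n, X (r, c) * (t.map fun j => X (r, j)).prod * fernZ c ts s

noncomputable section

namespace LTree

variable {n : ℕ}

@[simp] lemma label_node (r : Fin n) (cs) : (node r cs).label = r := rfl
@[simp] lemma children_node (r : Fin n) (cs) : (node r cs).children = cs := rfl

/-- Change the root label. -/
def setLabel : LTree n → Fin n → LTree n
  | node _ cs, j => node j cs

@[simp] lemma setLabel_label (t : LTree n) (j) : (t.setLabel j).label = j := by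
  cases t; rfl

@[simp] lemma setLabel_children (t : LTree n) (j) : (t.setLabel j).children = t.children := by
  cases t; rfl

lemma weight_node (r : Fin n) (cs : List (LTree n)) :
    (node r cs).weight = (cs.map fun c => X (r, c.label) * c.weight).prod := by
  rw [weight]
  congr 1
  rw [List.map_attach_eq_pmap]
  simp [List.pmap_eq_map]

@[simp] lemma subtreeAt?_nil (t : LTree n) : t.subtreeAt? [] = some t := rfl

lemma subtreeAt?_cons (t : LTree n) (k : ℕ) (q : List ℕ) :
    t.subtreeAt? (k :: q) = (t.children[k]?).bind fun c => c.subtreeAt? q := by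
  cases h : t.children[k]? <;> simp [subtreeAt?, h]

@[simp] lemma labelAt?_nil (t : LTree n) : t.labelAt? [] = some t.label := rfl

lemma labelAt?_cons (t : LTree n) (k : ℕ) (q : List ℕ) :
    t.labelAt? (k :: q) = (t.children[k]?).bind fun c => c.labelAt? q := by
  rw [labelAt?, subtreeAt?_cons]
  cases h : t.children[k]? <;> simp [labelAt?]

lemma isSome_subtreeAt?_cons_iff (t : LTree n) (k : ℕ) :
    (t.subtreeAt? [k]).isSome ↔ k < t.children.length := by
  rw [subtreeAt?_cons]
  cases h : t.children[k]? with
  | none => simp_all [List.getElem?_eq_none_iff]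
  | some c =>
    have := List.getElem?_eq_some_iff.mp h
    simp [this.1]

/-- Extensionality: same shape and same labels everywhere implies equal. -/
theorem ext_of : ∀ (t1 t2 : LTree n),
    (∀ q, (t1.subtreeAt? q).isSome ↔ (t2.subtreeAt? q).isSome) →
    (∀ q, t1.labelAt? q = t2.labelAt? q) → t1 = t2
  | node r1 cs1, node r2 cs2, hs, hl => by
    have hr : r1 = r2 := by simpa using hl []
    have hlen : cs1.length = cs2.length := by
      have h1 := (isSome_subtreeAt?_cons_iff (node r1 cs1) cs1.length).symm.trans
        ((hs [cs1.length]).trans (isSome_subtreeAt?_cons_iff (node r2 cs2) cs1.length))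
      have h2 := (isSome_subtreeAt?_cons_iff (node r1 cs1) cs2.length).symm.trans
        ((hs [cs2.length]).trans (isSome_subtreeAt?_cons_iff (node r2 cs2) cs2.length))
      simp only [children_node] at h1 h2
      omega
    have hcs : cs1 = cs2 := by
      apply List.ext_getElem hlen
      intro i hi1 hi2
      have := List.sizeOf_lt_of_mem (cs1.getElem_mem hi1)
      apply ext_of
      · intro q
        have := hs (i :: q)
        simpa [subtreeAt?_cons, List.getElem?_eq_getElem, hi1, hi2] using this
      · intro q
        have := hl (i :: q)
        simpa [labelAt?_cons, List.getElem?_eq_getElem, hi1, hi2] using this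
    rw [hr, hcs]
termination_by t1 => sizeOf t1
decreasing_by simp only [LTree.node.sizeOf_spec]; omega

end LTree
namespace LTree

variable {n : ℕ}

/-- Relabel the interior vertices of the path `p`: the vertex at `p.take (k+1)` receives
the `k`-th label of `L`. -/
def relabel : LTree n → List ℕ → List (Fin n) → LTree n
  | t, [], _ => t
  | t, _ :: _, [] => t
  | node r cs, k :: ks, c :: cs' =>
      node r (cs.set k (relabel ((cs.getD k (node r [])).setLabel c) ks cs'))
termination_by _ _ L => L.length

@[simp] lemma relabel_nil_path (t : LTree n) (L) : t.relabel [] L = t := by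
  cases t <;> cases L <;> simp [relabel]

@[simp] lemma relabel_nil_labels (t : LTree n) (p) : t.relabel p [] = t := by
  cases t <;> cases p <;> simp [relabel]

lemma relabel_cons (r : Fin n) (cs : List (LTree n)) (k : ℕ) (ks : List ℕ)
    (c : Fin n) (cs' : List (Fin n)) :
    (node r cs).relabel (k :: ks) (c :: cs') =
      node r (cs.set k (relabel ((cs.getD k (node r [])).setLabel c) ks cs')) := by
  rw [relabel]

@[simp] lemma relabel_label (t : LTree n) (p L) : (t.relabel p L).label = t.label := by
  cases t with
  | node r cs =>
    cases p with
    | nil => simp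
    | cons k ks => cases L with
      | nil => simp
      | cons c cs' => rw [relabel_cons]; rfl

/-- Membership of a valid path in a tree. -/
def validPath : LTree n → List ℕ → Prop
  | _, [] => True
  | t, k :: ks => ∃ c, t.children[k]? = some c ∧ validPath c ks

lemma validPath_setLabel (t : LTree n) (j) (p) (h : validPath t p) :
    validPath (t.setLabel j) p := by
  cases p with
  | nil => trivial
  | cons k ks =>
    obtain ⟨c, hc, hv⟩ := h
    exact ⟨c, by rwa [setLabel_children], hv⟩

/-- The shape is preserved by `relabel`. -/
lemma isSome_subtreeAt?_relabel : ∀ (L : List (Fin n)) (p : List ℕ) (t : LTree n) (q : List ℕ),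
    ((t.relabel p L).subtreeAt? q).isSome ↔ (t.subtreeAt? q).isSome
  | [], p, t, q => by simp
  | _ :: _, [], t, q => by simp
  | c :: cs', k :: ks, node r cs, q => by
    rw [relabel_cons]
    cases q with
    | nil => simp
    | cons j q' =>
      rw [subtreeAt?_cons, subtreeAt?_cons, children_node, children_node]
      rcases eq_or_ne j k with h | hj
      case inl =>
        rw [h]
        by_cases hk : k < cs.length
        · rw [List.getElem?_set_self' (l := cs)]
          rw [List.getElem?_eq_getElem hk]
          simp only [Option.map_eq_map, Option.map_some, Option.bind_some, Option.bind_some, Function.const_apply]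
          have hget : cs.getD k (node r []) = cs[k] := List.getD_eq_getElem cs _ hk
          rw [hget]
          rw [isSome_subtreeAt?_relabel cs' ks (cs[k].setLabel c) q']
          cases q' with
          | nil => simp
          | cons a b =>
            rw [subtreeAt?_cons, subtreeAt?_cons, setLabel_children]
        · rw [List.getElem?_eq_none (by simpa using hk), List.getElem?_eq_none (by omega)]
      case inr => rw [List.getElem?_set_ne (Ne.symm hj)]
  termination_by L => L.length

/-- Labels off the interior of the path are preserved by `relabel`. -/
lemma labelAt?_relabel_off : ∀ (L : List (Fin n)) (p : List ℕ) (t : LTree n) (q : List ℕ),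
    (∀ k, 1 ≤ k → k ≤ L.length → q ≠ p.take k) →
    (t.relabel p L).labelAt? q = t.labelAt? q
  | [], p, t, q, _ => by simp
  | _ :: _, [], t, q, _ => by simp
  | c :: cs', k :: ks, node r cs, q, hq => by
    rw [relabel_cons]
    cases q with
    | nil => simp
    | cons j q' =>
      rw [labelAt?_cons, labelAt?_cons, children_node, children_node]
      rcases eq_or_ne j k with h | hj
      case inl =>
        rw [h]
        by_cases hk : k < cs.length
        · rw [List.getElem?_set_self' (l := cs)]
          rw [List.getElem?_eq_getElem hk]
          simp only [Option.map_eq_map, Option.map_some, Option.bind_some, Option.bind_some, Function.const_apply]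
          have hget : cs.getD k (node r []) = cs[k] := List.getD_eq_getElem cs _ hk
          rw [hget]
          rw [labelAt?_relabel_off cs' ks (cs[k].setLabel c) q' (by
            intro m hm1 hm2 hqm
            exact hq (m+1) (by omega) (by simpa using hm2) (by rw [hqm, h]; rfl))]
          cases q' with
          | nil =>
            exact absurd h (by simpa using hq 1 le_rfl (by simp))
          | cons a b =>
            rw [labelAt?_cons, labelAt?_cons, setLabel_children]
        · rw [List.getElem?_eq_none (by simpa using hk), List.getElem?_eq_none (by omega)]
      case inr => rw [List.getElem?_set_ne (Ne.symm hj)]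
  termination_by L => L.length

/-- Labels on the interior of the path are given by `L`. -/
lemma labelAt?_relabel_on : ∀ (L : List (Fin n)) (p : List ℕ) (t : LTree n),
    validPath t p → ∀ k, k < L.length → k < p.length →
    (t.relabel p L).labelAt? (p.take (k+1)) = L[k]?
  | [], p, t, _, k, hk, _ => by simp at hk
  | c :: cs', [], t, _, k, _, hk => by simp at hk
  | c :: cs', k0 :: ks, node r cs, hv, k, hk1, hk2 => by
    obtain ⟨c0, hc0, hv'⟩ := hv
    rw [children_node] at hc0
    have hlen : k0 < cs.length := (List.getElem?_eq_some_iff.mp hc0).1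
    have hget : cs.getD k0 (node r []) = c0 := by
      rw [List.getD_eq_getElem?_getD, hc0]; rfl
    rw [relabel_cons, hget]
    cases k with
    | zero =>
      rw [List.take_succ_cons, List.take_zero, labelAt?_cons, children_node,
        List.getElem?_set_self' (l := cs), List.getElem?_eq_getElem hlen]
      simp
    | succ m =>
      rw [List.take_succ_cons, labelAt?_cons, children_node,
        List.getElem?_set_self' (l := cs), List.getElem?_eq_getElem hlen]
      simp only [Option.map_eq_map, Option.map_some, Option.bind_some, Option.bind_some, Function.const_apply]
      rw [labelAt?_relabel_on cs' ks (c0.setLabel c)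
        (validPath_setLabel _ _ _ hv') m (by simpa using hk1) (by simpa using hk2)]
      simp
  termination_by L => L.length

end LTree
namespace LTree

variable {n : ℕ}

lemma map_prod_set {α M : Type*} [CommMonoid M] (l : List α) (k : ℕ) (h : k < l.length)
    (x : α) (f : α → M) :
    ((l.set k x).map f).prod = f x * ((l.eraseIdx k).map f).prod := by
  rw [List.set_eq_take_cons_drop _ h, List.eraseIdx_eq_take_drop_succ]
  simp only [List.map_append, List.prod_append, List.map_cons, List.prod_cons]
  rw [mul_left_comm]

lemma map_eraseIdx' {α β : Type*} (f : α → β) (l : List α) (k : ℕ) :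
    (l.eraseIdx k).map f = (l.map f).eraseIdx k := by
  rw [List.eraseIdx_eq_take_drop_succ, List.eraseIdx_eq_take_drop_succ]
  simp [List.map_take, List.map_drop]

/-- The product of the weights of the subtrees hanging off the path. -/
noncomputable def hangF : LTree n → List ℕ → ℕ → MvPolynomial (Fin n × Fin n) ℚ
  | _, _, 0 => 1
  | t, _, 1 => (t.children.map weight).prod
  | _, [], _ + 2 => 1
  | t, k :: ks, m + 2 =>
      ((t.children.eraseIdx k).map weight).prod *
        (match t.children[k]? with
          | some c => hangF c ks (m + 1)
          | none => 1)
termination_by _ _ m => m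

lemma hangF_one (t : LTree n) (p : List ℕ) :
    hangF t p 1 = (t.children.map weight).prod := by
  cases p <;> rw [hangF]

lemma hangF_cons (t : LTree n) (k : ℕ) (ks : List ℕ) (m : ℕ) (c : LTree n)
    (hc : t.children[k]? = some c) :
    hangF t (k :: ks) (m + 2) =
      ((t.children.eraseIdx k).map weight).prod * hangF c ks (m + 1) := by
  rw [hangF, hc]

lemma hangF_setLabel (t : LTree n) (j : Fin n) (p : List ℕ) (m : ℕ) :
    hangF (t.setLabel j) p m = hangF t p m := by
  match m, p with
  | 0, _ => rw [hangF, hangF]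
  | 1, _ => cases p <;> rw [hangF, hangF, setLabel_children]
  | _ + 2, [] => rw [hangF, hangF]
  | _ + 2, k :: ks => rw [hangF, hangF, setLabel_children]

/-- The key computation: the sum of the weights of all relabelings of the interior of the
path equals the fern polynomial times the hanging product. -/
lemma key (m : ℕ) : ∀ (p : List ℕ) (t : LTree n) (v : ℕ → LTree n), v 0 = t →
    p.length = m + 1 →
    (∀ k < m + 1, ((v k).children)[p.getD k 0]? = some (v (k + 1))) →
    ∑ L : Fin m → Fin n, (t.relabel p (List.ofFn L)).weight =
      fernZ t.label
        (List.ofFn fun k : Fin m => ((v k.1).children.map label).eraseIdx (p.getD k.1 0))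
        ((v m).children.map label) * hangF t p (m + 1) := by
  induction m with
  | zero =>
    intro p t v hv0 hlen hchain
    rw [Fintype.sum_unique]
    have h0 : (default : Fin 0 → Fin n) = fun i => i.elim0 := Subsingleton.elim _ _
    rw [h0, List.ofFn_zero, relabel_nil_labels, List.ofFn_zero, hangF_one, hv0]
    cases t with
    | node r cs =>
      rw [weight_node, fernZ, label_node, children_node, List.map_map, List.prod_map_mul]
      rfl
  | succ m ih =>
    intro p t v hv0 hlen hchain
    cases p with
    | nil => simp at hlen
    | cons k0 ks =>
    cases t with
    | node r cs =>
    have hc0 : cs[k0]? = some (v 1) := by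
      have := hchain 0 (by omega)
      rwa [hv0, List.getD_cons_zero, children_node] at this
    have hk0 : k0 < cs.length := (List.getElem?_eq_some_iff.mp hc0).1
    have hget : cs.getD k0 (node r []) = v 1 := by
      rw [List.getD_eq_getElem?_getD, hc0]; rfl
    have hkslen : ks.length = m + 1 := by simpa using hlen
    -- abbreviations
    set SibX : MvPolynomial (Fin n × Fin n) ℚ :=
      (((cs.map label).eraseIdx k0).map fun j => X (r, j)).prod with hSibX
    set SibW : MvPolynomial (Fin n × Fin n) ℚ :=
      ((cs.eraseIdx k0).map weight).prod with hSibW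
    -- rewrite each summand
    have hterm : ∀ L : Fin (m + 1) → Fin n,
        ((node r cs).relabel (k0 :: ks) (List.ofFn L)).weight =
          (X (r, L 0) *
            (((v 1).setLabel (L 0)).relabel ks (List.ofFn fun i => L i.succ)).weight) *
            (SibX * SibW) := by
      intro L
      rw [List.ofFn_succ, relabel_cons, hget, weight_node, map_prod_set cs k0 hk0]
      rw [relabel_label, setLabel_label]
      congr 1
      rw [List.prod_map_mul, hSibX, hSibW, ← map_eraseIdx', List.map_map]
      rfl
    rw [Finset.sum_congr rfl fun L _ => hterm L]
    -- split the sum over the first label and the rest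
    rw [← Equiv.sum_comp (Fin.consEquiv fun _ : Fin (m + 1) => Fin n)
      (fun L => (X (r, L 0) *
        (((v 1).setLabel (L 0)).relabel ks (List.ofFn fun i => L i.succ)).weight) *
        (SibX * SibW))]
    rw [Fintype.sum_prod_type]
    simp only [Fin.consEquiv_apply, Fin.cons_zero, Fin.cons_succ]
    -- apply the induction hypothesis for each first label c
    have hinner : ∀ c : Fin n,
        (∑ L' : Fin m → Fin n,
          (((v 1).setLabel c).relabel ks (List.ofFn fun i => L' i)).weight) =
        fernZ c
          (List.ofFn fun k : Fin m =>
            ((v (k.1 + 1)).children.map label).eraseIdx (ks.getD k.1 0))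
          ((v (m + 1)).children.map label) * hangF (v 1) ks (m + 1) := by
      intro c
      set v' : ℕ → LTree n := fun k => if k = 0 then (v 1).setLabel c else v (k + 1) with hv'
      have h0 : v' 0 = (v 1).setLabel c := by simp [hv']
      have hch2 : ∀ k, (v' k).children = (v (k + 1)).children := by
        intro k
        rcases Nat.eq_zero_or_pos k with rfl | hk
        · simp [hv']
        · have : k ≠ 0 := by omega
          simp [hv', this]
      have hch : ∀ k < m + 1, ((v' k).children)[ks.getD k 0]? = some (v' (k + 1)) := by
        intro k hk
        rw [hch2 k]
        have hne : k + 1 ≠ 0 := by omega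
        have : v' (k + 1) = v (k + 2) := by simp [hv', hne]
        rw [this]
        have := hchain (k + 1) (by omega)
        rwa [List.getD_cons_succ] at this
      have hIH := ih ks ((v 1).setLabel c) v' h0 hkslen hch
      rw [setLabel_label, hangF_setLabel] at hIH
      rw [hIH]
      congr 2
      · apply congrArg List.ofFn
        funext k
        rw [hch2 k.1]
      · rw [hch2 m]
    have hout : ∀ c : Fin n,
        (∑ L' : Fin m → Fin n,
          X (r, c) * (((v 1).setLabel c).relabel ks (List.ofFn fun i => L' i)).weight *
            (SibX * SibW)) =
        (X (r, c) * SibX *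
          (fernZ c
            (List.ofFn fun k : Fin m =>
              ((v (k.1 + 1)).children.map label).eraseIdx (ks.getD k.1 0))
            ((v (m + 1)).children.map label))) *
          (SibW * hangF (v 1) ks (m + 1)) := by
      intro c
      rw [← Finset.sum_mul, ← Finset.mul_sum, hinner c]
      ring
    rw [Finset.sum_congr rfl fun c _ => hout c]
    -- now identify with the RHS
    have hRhang : (node r cs).hangF (k0 :: ks) (m + 1 + 1) =
        SibW * hangF (v 1) ks (m + 1) := by
      rw [show m + 1 + 1 = m + 2 from rfl,
        hangF_cons (node r cs) k0 ks m (v 1) (by rwa [children_node]), children_node, hSibW]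
    rw [label_node, List.ofFn_succ, fernZ, hRhang]
    have hhead : ∀ c : Fin n, X (r, c) *
        ((((v (↑(0 : Fin (m + 1 + 1)))).children.map label).eraseIdx
          ((k0 :: ks).getD (↑(0 : Fin (m + 1 + 1))) 0)).map fun j => X (r, j)).prod =
        X (r, c) * SibX := by
      intro c
      rw [Fin.val_zero, hv0, children_node, List.getD_cons_zero, hSibX]
    have htail : (fun i : Fin (m + 1) =>
        (((v (↑(Fin.succ i))).children.map label).eraseIdx
          ((k0 :: ks).getD (↑(Fin.succ i)) 0)))
        = fun k : Fin (m + 1) =>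
          ((v (k.1 + 1)).children.map label).eraseIdx (ks.getD k.1 0) := by
      funext k
      rw [Fin.val_succ, List.getD_cons_succ]
    rw [Finset.sum_mul]
    apply Finset.sum_congr rfl
    intro c _
    rw [Fin.val_zero, hv0, children_node, List.getD_cons_zero, ← hSibX]
    simp only [Fin.val_succ, List.getD_cons_succ]
end LTree
namespace LTree

variable {n : ℕ}

lemma validPath_of_chain : ∀ (p : List ℕ) (v : ℕ → LTree n),
    (∀ k < p.length, ((v k).children)[p.getD k 0]? = some (v (k + 1))) →
    validPath (v 0) p
  | [], _, _ => trivial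
  | k0 :: ks, v, h => by
    refine ⟨v 1, ?_, ?_⟩
    · have := h 0 (by simp)
      rwa [List.getD_cons_zero] at this
    · have := validPath_of_chain ks (fun k => v (k + 1)) (fun k hk => by
        have := h (k + 1) (by simpa using hk)
        rwa [List.getD_cons_succ] at this)
      exact this

lemma isSome_subtreeAt?_take : ∀ (p : List ℕ) (t : LTree n), validPath t p →
    ∀ k, (t.subtreeAt? (p.take k)).isSome
  | [], t, _, k => by simp
  | k0 :: ks, t, ⟨c, hc, hv⟩, k => by
    cases k with
    | zero => simp
    | succ k' =>
      rw [List.take_succ_cons, subtreeAt?_cons, hc]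
      simpa using isSome_subtreeAt?_take ks c hv k'

lemma getElem?_ofFn_eq {m : ℕ} {α : Type*} (L : Fin m → α) (k : Fin m) :
    (List.ofFn L)[k.1]? = some (L k) := by
  rw [List.getElem?_eq_getElem (by simp)]
  simp

end LTree

/-- let `d ≥ 2` and let `T` be a `d`-regular rooted plane tree of height at
least `n` with labeling `λ` (encoded as the labeled tree `T : LTree n`).  Let `p` be the
leftmost `n`-path `LP_n(T)` (the lexicographically least valid position of length `n`),
with vertices `v 0 = root, v 1, …, v n` along it.  Then `z(fern_{d,n}, λ_fern)` divides
`∑_{η ∈ K(T,λ)} w(T,η)`, where `K(T,λ)` is the set of labelings agreeing with `λ` off the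
interior of `LP_n(T)`, and `λ_fern` labels the root of the fern by `λ(root T)` and its
leaves by the `λ`-labels of the children of the vertices of `LP_n(T)`. -/
theorem stmt1 (n d : ℕ) (hn : 1 ≤ n) (hd : 2 ≤ d)
    (T : LTree n) (hreg : T.IsReg d)
    (p : List ℕ) (hlen : p.length = n)
    (v : ℕ → LTree n) (hv0 : v 0 = T)
    (hchain : ∀ k < n, ((v k).children)[p.getD k 0]? = some (v (k + 1)))
    (hleft : ∀ q : List ℕ, q.length = n → (T.subtreeAt? q).isSome →
      p = q ∨ List.Lex (· < ·) p q) :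
    ∃ g : MvPolynomial (Fin n × Fin n) ℚ,
      (∑ᶠ T' ∈ {T' : LTree n |
          (∀ q : List ℕ, (T.subtreeAt? q).isSome ↔ (T'.subtreeAt? q).isSome) ∧
          ∀ q : List ℕ, (∀ k : ℕ, 1 ≤ k → k < n → q ≠ p.take k) →
            T.labelAt? q = T'.labelAt? q}, T'.weight) =
        fernZ T.label
          (List.ofFn fun k : Fin (n - 1) =>
            ((v k.1).children.map LTree.label).eraseIdx (p.getD k.1 0))
          ((v (n - 1)).children.map LTree.label) * g := by
  classical
  open LTree in
  obtain ⟨m, rfl⟩ : ∃ m, n = m + 1 := ⟨n - 1, by omega⟩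
  have hvalid : T.validPath p := by
    have := LTree.validPath_of_chain p v (fun k hk => hchain k (by omega))
    rwa [hv0] at this
  set f : (Fin m → Fin (m + 1)) → LTree (m + 1) :=
    fun L => T.relabel p (List.ofFn L) with hf
  have honpath : ∀ (L : Fin m → Fin (m + 1)) (k : Fin m),
      (f L).labelAt? (p.take (k.1 + 1)) = some (L k) := by
    intro L k
    rw [hf]
    rw [LTree.labelAt?_relabel_on (List.ofFn L) p T hvalid k.1 (by simp) (by omega)]
    exact LTree.getElem?_ofFn_eq L k
  have hinj : Function.Injective f := by
    intro L1 L2 h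
    funext k
    have h1 := honpath L1 k
    rw [h] at h1
    rw [honpath L2 k] at h1
    exact (Option.some_injective _ h1).symm
  have hset : {T' : LTree (m + 1) |
      (∀ q : List ℕ, (T.subtreeAt? q).isSome ↔ (T'.subtreeAt? q).isSome) ∧
      ∀ q : List ℕ, (∀ k : ℕ, 1 ≤ k → k < m + 1 → q ≠ p.take k) →
        T.labelAt? q = T'.labelAt? q} = Set.range f := by
    ext T'
    constructor
    · rintro ⟨hsh, hlb⟩
      set L : Fin m → Fin (m + 1) :=
        fun k => (T'.labelAt? (p.take (k.1 + 1))).getD T.label with hL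
      have hsome : ∀ k : Fin m, (T'.labelAt? (p.take (k.1 + 1))).isSome := by
        intro k
        have h1 : (T.subtreeAt? (p.take (k.1 + 1))).isSome :=
          LTree.isSome_subtreeAt?_take p T hvalid _
        have h2 := (hsh (p.take (k.1 + 1))).mp h1
        simpa [LTree.labelAt?] using h2
      refine ⟨L, LTree.ext_of (f L) T' (fun q =>
        (LTree.isSome_subtreeAt?_relabel (List.ofFn L) p T q).trans (hsh q)) ?_⟩
      intro q
      by_cases hex : ∃ k, 1 ≤ k ∧ k < m + 1 ∧ q = p.take k
      · obtain ⟨k, hk1, hk2, rfl⟩ := hex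
        obtain ⟨k', rfl⟩ : ∃ k', k = k' + 1 := ⟨k - 1, by omega⟩
        have hk'm : k' < m := by omega
        rw [honpath L ⟨k', hk'm⟩]
        obtain ⟨a, ha⟩ := Option.isSome_iff_exists.mp (hsome ⟨k', hk'm⟩)
        rw [ha, hL]
        simp [ha]
      · push_neg at hex
        rw [hf]
        rw [LTree.labelAt?_relabel_off (List.ofFn L) p T q
          (fun k hk1 hk2 => hex k hk1 (by simp at hk2; omega))]
        exact hlb q hex
    · rintro ⟨L, rfl⟩
      refine ⟨fun q => (LTree.isSome_subtreeAt?_relabel (List.ofFn L) p T q).symm, ?_⟩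
      intro q hq
      rw [hf]
      exact (LTree.labelAt?_relabel_off (List.ofFn L) p T q
        (fun k hk1 hk2 => hq k hk1 (by simp at hk2; omega))).symm
  rw [hset, finsum_mem_range hinj, finsum_eq_sum_of_fintype]
  refine ⟨LTree.hangF T p (m + 1), ?_⟩
  have hkey := LTree.key m p T v hv0 (by omega) (fun k hk => hchain k (by omega))
  exact hkey
end
end

section
/- Let d ≥ 2 and fix l ∈ [1,n]. For all i, j ∈ [1,n], (B^n)_{i,j} = −Σ_{k=0}^{n−1} (B^k)_{i,j} · d^{−(n−k)} · J_{α(n−k,l)}, an identity in R, where J_{α(n−k,l)} ∈ R is the coefficient of x_l^{(n−k)(d−1)} in Jac(f). -/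
open MvPolynomial Matrix

noncomputable section

/-- `R n` is the polynomial ring `ℚ[a_{i,j} : 1 ≤ i,j ≤ n]`. -/
abbrev JacR (n : ℕ) : Type := MvPolynomial (Fin n × Fin n) ℚ

/-- The `i`-th component of the degree `d`-linear map:
`f_i = x_i - (∑_j a_{i,j} x_j)^d`. -/
def degLinMap (n d : ℕ) (i : Fin n) : MvPolynomial (Fin n) (JacR n) :=
  X i - (∑ j : Fin n, C (X (i, j) : JacR n) * X j) ^ d

/-- The differential `D(f)`, with `(D(f))_{i,j} = ∂f_i/∂x_j`. -/
def diffMat (n d : ℕ) : Matrix (Fin n) (Fin n) (MvPolynomial (Fin n) (JacR n)) :=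
  fun i j => pderiv j (degLinMap n d i)

/-- The Jacobian `Jac(f) = det(D(f))`. -/
def jacPoly (n d : ℕ) : MvPolynomial (Fin n) (JacR n) := (diffMat n d).det

/-- The matrix `B` with entries `B_{i,j} = a_{i,j} · a_{i,l}^{d-1}`. -/
def Bmat (n d : ℕ) (l : Fin n) : Matrix (Fin n) (Fin n) (JacR n) :=
  fun i j => X (i, j) * X (i, l) ^ (d - 1)

lemma coeff_aeval_single {σ R : Type*} [DecidableEq σ] [CommSemiring R]
    (l : σ) (p : MvPolynomial σ R) (e : ℕ) :
    (MvPolynomial.aeval (fun m => if m = l then (Polynomial.X : Polynomial R) else 0) p).coeff e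
      = MvPolynomial.coeff (Finsupp.single l e) p := by
  induction p using MvPolynomial.induction_on' with
  | add p q hp hq => simp [map_add, MvPolynomial.coeff_add, hp, hq]
  | monomial s a =>
    rw [MvPolynomial.aeval_monomial, MvPolynomial.coeff_monomial]
    by_cases h : ∀ m ∈ s.support, m = l
    · have hs : s = Finsupp.single l (s l) :=
        Finsupp.support_subset_singleton.mp (fun m hm => by simpa using h m hm)
      rw [hs, Finsupp.prod_single_index (by simp)]
      simp only [if_true, Polynomial.algebraMap_eq, Polynomial.coeff_C_mul,
        Polynomial.coeff_X_pow]
      have hiff : Finsupp.single l (s l) = Finsupp.single l e ↔ e = s l :=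
        ⟨fun h' => (Finsupp.single_injective l h').symm, fun h' => by rw [h']⟩
      by_cases he : e = s l
      · rw [if_pos he, if_pos (hiff.mpr he), mul_one]
      · rw [if_neg he, if_neg (fun h' => he (hiff.mp h')), mul_zero]
    · push_neg at h
      obtain ⟨m, hm, hml⟩ := h
      have h0 : (s.prod fun i k => (if i = l then (Polynomial.X : Polynomial R) else 0) ^ k) = 0 :=
        Finset.prod_eq_zero hm
          (by simp [if_neg hml, zero_pow (Finsupp.mem_support_iff.mp hm)])
      rw [h0, mul_zero, if_neg, Polynomial.coeff_zero]
      intro h'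
      exact (Finsupp.mem_support_iff.mp hm)
        (by rw [h']; exact Finsupp.single_eq_of_ne hml)

lemma reflect_prod {R ι : Type*} [CommSemiring R] (s : Finset ι)
    (f : ι → Polynomial R) (hf : ∀ i ∈ s, (f i).natDegree ≤ 1) :
    Polynomial.reflect s.card (∏ i ∈ s, f i) = ∏ i ∈ s, Polynomial.reflect 1 (f i) := by
  classical
  induction s using Finset.induction_on with
  | empty => simp
  | @insert a s ha ih =>
    have h1 : (f a).natDegree ≤ 1 := hf a (Finset.mem_insert_self a s)
    have h2 : (∏ i ∈ s, f i).natDegree ≤ s.card := by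
      refine le_trans (Polynomial.natDegree_prod_le s f) ?_
      calc ∑ i ∈ s, (f i).natDegree ≤ ∑ _i ∈ s, 1 :=
            Finset.sum_le_sum fun i hi => hf i (Finset.mem_insert_of_mem hi)
        _ = s.card := by simp
    rw [Finset.prod_insert ha, Finset.prod_insert ha, Finset.card_insert_of_notMem ha,
      add_comm, Polynomial.reflect_mul _ _ h1 h2,
      ih fun i hi => hf i (Finset.mem_insert_of_mem hi)]

lemma reflect_one_charmatrix {n : ℕ} {R : Type*} [CommRing R] (M : Matrix (Fin n) (Fin n) R)
    (a b : Fin n) :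
    Polynomial.reflect 1 (Matrix.charmatrix M a b)
      = ((1 : Matrix (Fin n) (Fin n) (Polynomial R)) - (Polynomial.X : Polynomial R) • M.map Polynomial.C) a b := by
  rw [Matrix.sub_apply, Matrix.one_apply, Matrix.smul_apply, Matrix.map_apply, smul_eq_mul]
  by_cases h : a = b
  · subst h
    rw [Matrix.charmatrix_apply_eq, Polynomial.reflect_sub, Polynomial.reflect_C,
      if_pos rfl, Polynomial.reflect_one_X, pow_one]
    ring
  · rw [Matrix.charmatrix_apply_ne _ _ _ h, Polynomial.reflect_neg, Polynomial.reflect_C,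
      if_neg h]
    ring

lemma reflect_charpoly {n : ℕ} {R : Type*} [CommRing R] (M : Matrix (Fin n) (Fin n) R) :
    Polynomial.reflect n M.charpoly
      = ((1 : Matrix (Fin n) (Fin n) (Polynomial R)) - (Polynomial.X : Polynomial R) • M.map Polynomial.C).det := by
  have hdeg : ∀ a b : Fin n, (Matrix.charmatrix M a b).natDegree ≤ 1 := by
    intro a b
    by_cases h : a = b
    · subst h
      rw [Matrix.charmatrix_apply_eq]
      exact le_trans (Polynomial.natDegree_sub_le _ _)
        (by simp [Polynomial.natDegree_X_le])
    · rw [Matrix.charmatrix_apply_ne _ _ _ h]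
      simp
  rw [Matrix.charpoly, Matrix.det_apply', Matrix.det_apply']
  have hsum : ∀ (s : Finset (Equiv.Perm (Fin n))) (f : Equiv.Perm (Fin n) → Polynomial R),
      Polynomial.reflect n (∑ σ ∈ s, f σ) = ∑ σ ∈ s, Polynomial.reflect n (f σ) := fun s f =>
    map_sum (AddMonoidHom.mk' (Polynomial.reflect n) fun p q => Polynomial.reflect_add p q n) f s
  rw [hsum]
  refine Finset.sum_congr rfl fun σ _ => ?_
  have hn : n = (Finset.univ : Finset (Fin n)).card := by simp
  rw [show ((Equiv.Perm.sign σ : ℤ) : Polynomial R) = Polynomial.C ((Equiv.Perm.sign σ : ℤ) : R) by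
        simp,
    Polynomial.reflect_C_mul]
  congr 1
  have h := reflect_prod (Finset.univ : Finset (Fin n)) (fun i => M.charmatrix (σ i) i)
    (fun i _ => hdeg (σ i) i)
  rw [Finset.card_univ, Fintype.card_fin] at h
  rw [h]
  exact Finset.prod_congr rfl fun i _ => reflect_one_charmatrix M (σ i) i

lemma diffMat_apply (n d : ℕ) (i j : Fin n) :
    diffMat n d i j = (if i = j then 1 else 0)
      - (d : MvPolynomial (Fin n) (JacR n))
        * (∑ m : Fin n, C (X (i, m) : JacR n) * X m) ^ (d - 1) * C (X (i, j) : JacR n) := by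
  unfold diffMat degLinMap
  rw [map_sub, MvPolynomial.pderiv_pow]
  congr 1
  · rw [MvPolynomial.pderiv_X, Pi.single_apply]
  · congr 1
    rw [map_sum]
    simp [MvPolynomial.pderiv_C_mul, MvPolynomial.pderiv_X, Pi.single_apply,
      mul_ite, Finset.sum_ite_eq']

lemma coeff_jac (n d : ℕ) (hd : 2 ≤ d) (l : Fin n) (m : ℕ) (hm : m ≤ n) :
    MvPolynomial.coeff (Finsupp.single l (m * (d - 1))) (jacPoly n d)
      = (d : JacR n) ^ m * (Bmat n d l).charpoly.coeff (n - m) := by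
  classical
  have hd1 : 1 ≤ d - 1 := by omega
  set φ : MvPolynomial (Fin n) (JacR n) →ₐ[JacR n] Polynomial (JacR n) :=
    MvPolynomial.aeval (fun m => if m = l then (Polynomial.X : Polynomial (JacR n)) else 0)
    with hφ
  set θ : Polynomial (JacR n) →ₐ[JacR n] Polynomial (JacR n) :=
    Polynomial.aeval ((d : Polynomial (JacR n)) * Polynomial.X ^ (d - 1)) with hθ
  set B := Bmat n d l with hB
  set oneXB : Matrix (Fin n) (Fin n) (Polynomial (JacR n)) :=
    (1 : Matrix (Fin n) (Fin n) (Polynomial (JacR n)))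
      - (Polynomial.X : Polynomial (JacR n)) • B.map Polynomial.C with honeXB
  have step1 : MvPolynomial.coeff (Finsupp.single l (m * (d - 1))) (jacPoly n d)
      = (φ (jacPoly n d)).coeff (m * (d - 1)) := (coeff_aeval_single l _ _).symm
  have step3 : (diffMat n d).map φ = oneXB.map θ := by
    funext i j
    rw [Matrix.map_apply, Matrix.map_apply, diffMat_apply, honeXB]
    have hsum : φ (∑ m : Fin n, C (X (i, m) : JacR n) * X m)
        = Polynomial.C (X (i, l) : JacR n) * Polynomial.X := by
      rw [hφ, map_sum]
      simp [MvPolynomial.aeval_C, Polynomial.algebraMap_eq, mul_ite, Finset.sum_ite_eq']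
    rw [_root_.map_sub φ, _root_.map_mul, _root_.map_mul, _root_.map_pow, hsum, map_natCast]
    rw [Matrix.sub_apply, Matrix.one_apply, Matrix.smul_apply, Matrix.map_apply,
      smul_eq_mul, _root_.map_sub θ, _root_.map_mul]
    congr 1
    · split_ifs <;> simp
    · rw [hθ, Polynomial.aeval_X, hB]
      have : φ (C (X (i, j) : JacR n)) = Polynomial.C (X (i, j) : JacR n) := by
        rw [hφ, MvPolynomial.aeval_C, Polynomial.algebraMap_eq]
      rw [this]
      have : (Polynomial.aeval ((d : Polynomial (JacR n)) * Polynomial.X ^ (d - 1)))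
          (Polynomial.C (Bmat n d l i j)) = Polynomial.C (Bmat n d l i j) := by
        rw [Polynomial.aeval_C, Polynomial.algebraMap_eq]
      rw [this, Bmat, mul_pow, _root_.map_mul, _root_.map_pow]
      ring
  have step4 : φ (jacPoly n d) = θ (Polynomial.reflect n B.charpoly) := by
    rw [jacPoly, AlgHom.map_det, AlgHom.mapMatrix_apply, step3, ← AlgHom.mapMatrix_apply,
      ← AlgHom.map_det, honeXB, ← reflect_charpoly]
  rw [step1, step4]
  -- coefficient computation
  have hnd : (B.charpoly).natDegree = n := by
    rw [Matrix.charpoly_natDegree_eq_dim, Fintype.card_fin]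
  have hqdeg : (Polynomial.reflect n B.charpoly).natDegree < n + 1 := by
    rw [Nat.lt_succ_iff, Polynomial.natDegree_le_iff_coeff_eq_zero]
    intro N hN
    rw [Polynomial.coeff_reflect, Polynomial.revAt_eq_self_of_lt hN]
    exact Polynomial.coeff_eq_zero_of_natDegree_lt (by rw [hnd]; exact hN)
  rw [hθ, Polynomial.aeval_eq_sum_range' hqdeg, Polynomial.finset_sum_coeff]
  have hterm : ∀ k ∈ Finset.range (n + 1), k ≠ m →
      (((Polynomial.reflect n B.charpoly).coeff k)
        • ((d : Polynomial (JacR n)) * Polynomial.X ^ (d - 1)) ^ k).coeff (m * (d - 1)) = 0 := by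
    intro k _ hk
    rw [Polynomial.smul_eq_C_mul, mul_pow, ← pow_mul, ← Polynomial.C_eq_natCast, ← map_pow,
      ← mul_assoc, ← _root_.map_mul, Polynomial.coeff_C_mul, Polynomial.coeff_X_pow]
    rw [if_neg, mul_zero]
    intro h
    have h2 : (d - 1) * k = (d - 1) * m := by rw [← h, Nat.mul_comm]
    exact hk (Nat.eq_of_mul_eq_mul_left (by omega) h2)
  rw [Finset.sum_eq_single_of_mem m (Finset.mem_range.mpr (by omega)) hterm]
  rw [Polynomial.smul_eq_C_mul, mul_pow, ← pow_mul, ← Polynomial.C_eq_natCast, ← map_pow,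
    ← mul_assoc, ← _root_.map_mul, Polynomial.coeff_C_mul, Polynomial.coeff_X_pow,
    if_pos (Nat.mul_comm m (d - 1)), mul_one, Polynomial.coeff_reflect, Polynomial.revAt_le hm]
  ring

/-- `(B^n)_{i,j} = -∑_{k=0}^{n-1} (B^k)_{i,j} · d^{-(n-k)} · J_{α(n-k,l)}`,
where `J_{α(n-k,l)}` is the coefficient of `x_l^{(n-k)(d-1)}` in `Jac(f)`. -/
theorem stmt5 (n d : ℕ) (hn : 1 ≤ n) (hd : 2 ≤ d) (l : Fin n) (i j : Fin n) :
    (Bmat n d l ^ n) i j =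
      -∑ k ∈ Finset.range n,
        ((d : ℚ) ^ (n - k))⁻¹ •
          ((Bmat n d l ^ k) i j *
            coeff (Finsupp.single l ((n - k) * (d - 1))) (jacPoly n d)) := by
  classical
  set B := Bmat n d l with hB
  set c := B.charpoly with hc
  have hnd : c.natDegree = n := by
    rw [hc, Matrix.charpoly_natDegree_eq_dim, Fintype.card_fin]
  have hch : (0 : Matrix (Fin n) (Fin n) (JacR n))
      = ∑ k ∈ Finset.range (n + 1), c.coeff k • B ^ k := by
    have h0 := Matrix.aeval_self_charpoly B
    rw [Polynomial.aeval_eq_sum_range, hnd] at h0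
    exact h0.symm
  have hc_top : c.coeff n = 1 := by
    have hm := Matrix.charpoly_monic B
    rw [Polynomial.Monic, Polynomial.leadingCoeff, hnd] at hm
    exact hm
  have hBn : B ^ n = -∑ k ∈ Finset.range n, c.coeff k • B ^ k := by
    rw [Finset.sum_range_succ, hc_top, one_smul] at hch
    exact eq_neg_of_add_eq_zero_right hch.symm
  have hentry : (B ^ n) i j = -∑ k ∈ Finset.range n, c.coeff k * (B ^ k) i j := by
    rw [hBn]
    simp [Matrix.neg_apply, Matrix.sum_apply, Matrix.smul_apply, smul_eq_mul]
  rw [hentry]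
  congr 1
  refine Finset.sum_congr rfl fun k hk => ?_
  have hkn : k < n := Finset.mem_range.mp hk
  rw [coeff_jac n d hd l (n - k) (by omega), show n - (n - k) = k by omega, ← hB, ← hc]
  have hcast : (d : JacR n) ^ (n - k) = MvPolynomial.C ((d : ℚ) ^ (n - k)) := by
    rw [map_pow, map_natCast]
  rw [hcast, MvPolynomial.smul_eq_C_mul]
  have hne : ((d : ℚ) ^ (n - k)) ≠ 0 := by positivity
  rw [show (MvPolynomial.C (((d : ℚ) ^ (n - k))⁻¹) : JacR n)
        * ((B ^ k) i j * (MvPolynomial.C ((d : ℚ) ^ (n - k)) * c.coeff k))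
      = (MvPolynomial.C (((d : ℚ) ^ (n - k))⁻¹) * MvPolynomial.C ((d : ℚ) ^ (n - k)))
        * ((B ^ k) i j * c.coeff k) from by ring,
    ← _root_.map_mul, inv_mul_cancel₀ hne, _root_.map_one, one_mul]
  ring
end
end
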